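/- Let 1 ≤ k ≤ d-1, let ρ ∈ (0,1), and let S be a collection of spherical caps on S^{d-1} of radius ρ^d/(1000d) (boundedly overlapping). Then at least one of the following holds: (I) there exist τ_1, …, τ_{k+1} ∈ S such that |u_1 ∧ ⋯ ∧ u_{k+1}| ≥ ρ^k/2 for all choices u_j ∈ τ_j; or (II) there exists a k-dimensional linear subspace H ⊆ ℝ^d such that at least half the caps τ ∈ S are contained in the ρ-neighborhood N_ρ(H) of H. -/

import Mathlib

open Metric Set
open scoped RealInnerProductSpace

/-- `|u_1 ∧ ⋯ ∧ u_m|`: the volume of the parallelepiped spanned by `u_1,…,u_m`,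
i.e. the square root of the Gram determinant. -/
noncomputable def gramVol {d m : ℕ} (u : Fin m → EuclideanSpace ℝ (Fin d)) : ℝ :=
  Real.sqrt (Matrix.det (Matrix.of fun i j => (⟪u i, u j⟫ : ℝ)))

/-- The spherical cap of radius `r` centered at `e`. -/
def sphCap {d : ℕ} (e : EuclideanSpace ℝ (Fin d)) (r : ℝ) : Set (EuclideanSpace ℝ (Fin d)) :=
  {u | ‖u‖ = 1 ∧ ‖u - e‖ ≤ r}

open scoped Matrix

namespace BG

variable {d : ℕ}

noncomputable abbrev G {m : ℕ} (v : Fin m → EuclideanSpace ℝ (Fin d)) :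
    Matrix (Fin m) (Fin m) ℝ := Matrix.of fun i j => (⟪v i, v j⟫ : ℝ)

def A {m : ℕ} (v : Fin m → EuclideanSpace ℝ (Fin d)) : Matrix (Fin m) (Fin d) ℝ :=
  Matrix.of fun i l => v i l

lemma G_eq {m : ℕ} (v : Fin m → EuclideanSpace ℝ (Fin d)) : G v = A v * (A v)ᴴ := by
  ext i j
  simp only [G, A, Matrix.mul_apply, Matrix.conjTranspose_apply, Matrix.of_apply,
    PiLp.inner_apply, RCLike.inner_apply, conj_trivial, star_trivial]
  exact Finset.sum_congr rfl fun _ _ => mul_comm _ _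


lemma gramVol_eq {m : ℕ} (v : Fin m → EuclideanSpace ℝ (Fin d)) :
    gramVol v = Real.sqrt (G v).det := rfl

lemma gramVol_nonneg {m : ℕ} (v : Fin m → EuclideanSpace ℝ (Fin d)) : 0 ≤ gramVol v :=
  Real.sqrt_nonneg _

lemma gramVol_perm {m : ℕ} (v : Fin m → EuclideanSpace ℝ (Fin d)) (σ : Equiv.Perm (Fin m)) :
    gramVol (v ∘ σ) = gramVol v := by
  rw [gramVol_eq, gramVol_eq]
  congr 1
  have : G (v ∘ σ) = (G v).submatrix σ σ := by ext i j; rfl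
  rw [this, Matrix.det_submatrix_equiv_self]

variable {d : ℕ}

noncomputable def pd {m : ℕ} (w : Fin m → EuclideanSpace ℝ (Fin d))
    (x : EuclideanSpace ℝ (Fin d)) : ℝ :=
  ‖x - (Submodule.orthogonalProjectionOnto (Submodule.span ℝ (Set.range w)) x : EuclideanSpace ℝ (Fin d))‖

lemma pd_nonneg {m : ℕ} (w : Fin m → EuclideanSpace ℝ (Fin d)) (x) : 0 ≤ pd w x :=
  norm_nonneg _

lemma pd_eq_infDist {m : ℕ} (w : Fin m → EuclideanSpace ℝ (Fin d)) (x) :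
    pd w x = Metric.infDist x (Submodule.span ℝ (Set.range w) : Set (EuclideanSpace ℝ (Fin d))) := by
  rw [pd, ← Submodule.starProjection_apply, Submodule.starProjection_minimal, Metric.infDist_eq_iInf]
  simp only [dist_eq_norm]
  rfl

lemma pd_le {m : ℕ} (w : Fin m → EuclideanSpace ℝ (Fin d)) (x y)
    (hy : y ∈ Submodule.span ℝ (Set.range w)) : pd w x ≤ ‖x - y‖ := by
  rw [pd_eq_infDist, ← dist_eq_norm]
  exact Metric.infDist_le_dist_of_mem hy

lemma pd_le_norm {m : ℕ} (w : Fin m → EuclideanSpace ℝ (Fin d)) (x) : pd w x ≤ ‖x‖ := by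
  simpa using pd_le w x 0 (Submodule.zero_mem _)

lemma pd_lipschitz {m : ℕ} (w : Fin m → EuclideanSpace ℝ (Fin d)) (x y) :
    |pd w x - pd w y| ≤ ‖x - y‖ := by
  rw [pd_eq_infDist, pd_eq_infDist, ← dist_eq_norm, abs_sub_le_iff]
  constructor
  · have := Metric.infDist_le_infDist_add_dist (x := x) (y := y)
      (s := (Submodule.span ℝ (Set.range w) : Set (EuclideanSpace ℝ (Fin d))))
    have hd : dist x y = dist y x := dist_comm x y
    linarith
  · have := Metric.infDist_le_infDist_add_dist (x := y) (y := x)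
      (s := (Submodule.span ℝ (Set.range w) : Set (EuclideanSpace ℝ (Fin d))))
    have hd : dist x y = dist y x := dist_comm x y
    linarith

lemma det_G_snoc {m : ℕ} (w : Fin m → EuclideanSpace ℝ (Fin d)) (x : EuclideanSpace ℝ (Fin d)) :
    (G (Fin.snoc w x)).det = (G w).det * pd w x ^ 2 := by
  classical
  set K := Submodule.span ℝ (Set.range w) with hK
  obtain ⟨c, hc⟩ := (Submodule.mem_span_range_iff_exists_fun ℝ).1
    (SetLike.coe_mem (Submodule.orthogonalProjectionOnto K x))
  set y : EuclideanSpace ℝ (Fin d) :=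
    x - (Submodule.orthogonalProjectionOnto K x : EuclideanSpace ℝ (Fin d)) with hydef
  have hyO : y ∈ Kᗮ := K.sub_starProjection_mem_orthogonal x
  have hyw : ∀ i, (⟪w i, y⟫ : ℝ) = 0 := fun i =>
    Submodule.inner_right_of_mem_orthogonal (Submodule.subset_span (Set.mem_range_self i)) hyO
  set v : Fin (m+1) → EuclideanSpace ℝ (Fin d) := Fin.snoc w x with hv
  set v' : Fin (m+1) → EuclideanSpace ℝ (Fin d) := Fin.snoc w y with hv'
  have hv'v : ∀ j, j ≠ Fin.last m → v' j = v j := by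
    intro j hj
    obtain ⟨j', rfl⟩ := Fin.exists_castSucc_eq.2 hj
    simp [hv, hv']
  set c' : Fin (m+1) → ℝ := Fin.snoc (fun i => -c i) 1 with hc'
  have hsum : ∑ k, c' k • v k = y := by
    rw [Fin.sum_univ_castSucc]
    simp only [hc', hv, Fin.snoc_castSucc, Fin.snoc_last, one_smul]
    rw [hydef, ← hc]
    simp only [neg_smul, Finset.sum_neg_distrib]
    abel
  set M : Matrix (Fin (m+1)) (Fin (m+1)) ℝ := G v with hM
  have hMrow : ∀ k j, M k j = (⟪v k, v j⟫ : ℝ) := fun k j => rfl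
  have hrow : (∑ k, c' k • M k) = fun j => (⟪y, v j⟫ : ℝ) := by
    funext j
    have h1 : (∑ k, c' k • M k) j = ∑ k, c' k * (⟪v k, v j⟫ : ℝ) := by
      simp [Finset.sum_apply, hMrow]
    rw [h1, ← hsum, sum_inner]
    exact Finset.sum_congr rfl fun k _ => by rw [real_inner_smul_left]
  set M1 := M.updateRow (Fin.last m) (∑ k, c' k • M k) with hM1
  have hd1 : M1.det = M.det := by
    rw [hM1, Matrix.det_updateRow_sum]
    simp [hc', Fin.snoc_last]
  have h3 : Matrix.updateCol M1 (Fin.last m) (fun k => ∑ i, c' i • M1 k i) = G v' := by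
    ext k j
    rw [Matrix.updateCol_apply]
    by_cases hj : j = Fin.last m
    · subst hj
      simp only [if_pos rfl]
      by_cases hk : k = Fin.last m
      · subst hk
        have hr : M1 (Fin.last m) = fun j => (⟪y, v j⟫ : ℝ) := by
          rw [hM1, Matrix.updateRow_self, hrow]
        rw [hr]
        have : ∑ i, c' i • (⟪y, v i⟫ : ℝ) = (⟪y, ∑ i, c' i • v i⟫ : ℝ) := by
          rw [inner_sum]
          exact Finset.sum_congr rfl fun k _ => by rw [real_inner_smul_right]; rfl
        rw [this, hsum]
        show (⟪y, y⟫ : ℝ) = (⟪v' (Fin.last m), v' (Fin.last m)⟫ : ℝ)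
        simp [hv']
      · have hr : M1 k = M k := by rw [hM1]; exact Matrix.updateRow_ne hk ▸ rfl
        rw [hr]
        have : ∑ i, c' i • M k i = (⟪v k, ∑ i, c' i • v i⟫ : ℝ) := by
          rw [inner_sum]
          exact Finset.sum_congr rfl fun i _ => by
            rw [real_inner_smul_right, hMrow, smul_eq_mul]
        rw [this, hsum]
        show (⟪v k, y⟫ : ℝ) = (⟪v' k, v' (Fin.last m)⟫ : ℝ)
        rw [hv'v k hk]
        simp [hv']
    · simp only [if_neg hj]
      by_cases hk : k = Fin.last m
      · subst hk
        have hr : M1 (Fin.last m) = fun j => (⟪y, v j⟫ : ℝ) := by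
          rw [hM1, Matrix.updateRow_self, hrow]
        rw [hr]
        show (⟪y, v j⟫ : ℝ) = (⟪v' (Fin.last m), v' j⟫ : ℝ)
        rw [hv'v j hj]
        simp [hv']
      · have hr : M1 k j = M k j := by rw [hM1, Matrix.updateRow_ne hk]
        rw [hr, hMrow]
        show (⟪v k, v j⟫ : ℝ) = (⟪v' k, v' j⟫ : ℝ)
        rw [hv'v k hk, hv'v j hj]
  have hd2 : (G v').det = M1.det := by
    rw [← h3, Matrix.det_updateCol_sum]
    simp [hc', Fin.snoc_last]
  have hblock : ((G v').submatrix finSumFinEquiv finSumFinEquiv) =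
      Matrix.fromBlocks (G w) 0 0 (Matrix.of fun _ _ : Fin 1 => ‖y‖ ^ 2) := by
    ext a b
    have hinr : ∀ b : Fin 1, (finSumFinEquiv (Sum.inr b) : Fin (m+1)) = Fin.last m := by
      intro b
      have : b = 0 := Subsingleton.elim _ _
      subst this
      rfl
    have hinl : ∀ a : Fin m, (finSumFinEquiv (Sum.inl a) : Fin (m+1)) = Fin.castSucc a :=
      fun a => rfl
    cases a with
    | inl a =>
      cases b with
      | inl b =>
        simp only [Matrix.submatrix_apply, hinl, Matrix.fromBlocks_apply₁₁]
        show (⟪v' (Fin.castSucc a), v' (Fin.castSucc b)⟫ : ℝ) = (⟪w a, w b⟫ : ℝ)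
        simp [hv']
      | inr b =>
        simp only [Matrix.submatrix_apply, hinl, hinr, Matrix.fromBlocks_apply₁₂]
        show (⟪v' (Fin.castSucc a), v' (Fin.last m)⟫ : ℝ) = (0 : Matrix (Fin m) (Fin 1) ℝ) a b
        simp [hv', hyw]
    | inr a =>
      cases b with
      | inl b =>
        simp only [Matrix.submatrix_apply, hinl, hinr, Matrix.fromBlocks_apply₂₁]
        show (⟪v' (Fin.last m), v' (Fin.castSucc b)⟫ : ℝ) = (0 : Matrix (Fin 1) (Fin m) ℝ) a b
        rw [show v' (Fin.last m) = y from by simp [hv'],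
          show v' (Fin.castSucc b) = w b from by simp [hv'], real_inner_comm, hyw b]
        simp
      | inr b =>
        simp only [Matrix.submatrix_apply, hinr, Matrix.fromBlocks_apply₂₂]
        show (⟪v' (Fin.last m), v' (Fin.last m)⟫ : ℝ) = ‖y‖ ^ 2
        rw [show v' (Fin.last m) = y from by simp [hv'], real_inner_self_eq_norm_sq]
  have hdetv' : (G v').det = (G w).det * ‖y‖ ^ 2 := by
    rw [← Matrix.det_submatrix_equiv_self finSumFinEquiv (G v'), hblock,
      Matrix.det_fromBlocks_zero₂₁]
    congr 1
    simp [Matrix.det_fin_one]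
  have hpd : pd w x = ‖y‖ := rfl
  rw [hpd]
  calc (G v).det = M1.det := hd1.symm
    _ = (G v').det := hd2.symm
    _ = (G w).det * ‖y‖ ^ 2 := hdetv'


lemma det_G_nonneg {m : ℕ} (v : Fin m → EuclideanSpace ℝ (Fin d)) : 0 ≤ (G v).det := by
  induction m with
  | zero => simp [Matrix.det_fin_zero]
  | succ n ih =>
    rw [← Fin.snoc_init_self v, det_G_snoc]
    exact mul_nonneg (ih _) (sq_nonneg _)

lemma gramVol_snoc {m : ℕ} (w : Fin m → EuclideanSpace ℝ (Fin d)) (x) :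
    gramVol (Fin.snoc w x) = gramVol w * pd w x := by
  rw [gramVol_eq, gramVol_eq, det_G_snoc, Real.sqrt_mul (det_G_nonneg _),
    Real.sqrt_sq (pd_nonneg _ _)]

lemma gramVol_zero (v : Fin 0 → EuclideanSpace ℝ (Fin d)) : gramVol v = 1 := by
  rw [gramVol_eq, Matrix.det_fin_zero, Real.sqrt_one]

lemma gramVol_le_one {m : ℕ} (v : Fin m → EuclideanSpace ℝ (Fin d))
    (hv : ∀ i, ‖v i‖ ≤ 1) : gramVol v ≤ 1 := by
  induction m with
  | zero => rw [gramVol_zero]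
  | succ n ih =>
    rw [← Fin.snoc_init_self v, gramVol_snoc]
    have h1 : gramVol (Fin.init v) ≤ 1 := ih _ fun i => hv _
    have h2 : pd (Fin.init v) (v (Fin.last n)) ≤ 1 :=
      (pd_le_norm _ _).trans (hv _)
    exact mul_le_one₀ h1 (pd_nonneg _ _) h2

lemma gramVol_slot {m : ℕ} (f g : Fin (m+1) → EuclideanSpace ℝ (Fin d)) (i : Fin (m+1))
    (hfg : ∀ j, j ≠ i → f j = g j) (hf : ∀ j, ‖f j‖ ≤ 1) (hg : ∀ j, ‖g j‖ ≤ 1) :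
    |gramVol f - gramVol g| ≤ ‖f i - g i‖ := by
  set σ : Equiv.Perm (Fin (m+1)) := Equiv.swap i (Fin.last m) with hσ
  have hrest : Fin.init (f ∘ σ) = Fin.init (g ∘ σ) := by
    funext j
    have hne : σ (Fin.castSucc j) ≠ i := by
      intro h
      have h2 : Fin.castSucc j = σ i := by
        have := congrArg σ h
        rwa [Equiv.swap_apply_self] at this
      rw [hσ, Equiv.swap_apply_left] at h2
      exact absurd h2 (Fin.castSucc_lt_last j).ne
    exact hfg _ hne
  set R := Fin.init (f ∘ σ) with hR
  have hlastf : (f ∘ σ) (Fin.last m) = f i := by simp [hσ, Equiv.swap_apply_right]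
  have hlastg : (g ∘ σ) (Fin.last m) = g i := by simp [hσ, Equiv.swap_apply_right]
  have hfd : gramVol f = gramVol R * pd R (f i) := by
    conv_lhs => rw [← gramVol_perm f σ, ← Fin.snoc_init_self (f ∘ σ)]
    rw [gramVol_snoc, hlastf]
  have hgd : gramVol g = gramVol R * pd R (g i) := by
    conv_lhs => rw [← gramVol_perm g σ, ← Fin.snoc_init_self (g ∘ σ)]
    rw [gramVol_snoc, hlastg, ← hrest]
  have hR1 : gramVol R ≤ 1 := gramVol_le_one _ fun j => hf _
  rw [hfd, hgd, ← mul_sub, abs_mul, abs_of_nonneg (gramVol_nonneg R)]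
  calc gramVol R * |pd R (f i) - pd R (g i)| ≤ 1 * |pd R (f i) - pd R (g i)| :=
        mul_le_mul_of_nonneg_right hR1 (abs_nonneg _)
    _ = |pd R (f i) - pd R (g i)| := one_mul _
    _ ≤ ‖f i - g i‖ := pd_lipschitz _ _ _

lemma gramVol_approx {m : ℕ} (u e : Fin (m+1) → EuclideanSpace ℝ (Fin d)) (r : ℝ) (hr : 0 ≤ r)
    (hu : ∀ j, ‖u j‖ ≤ 1) (he : ∀ j, ‖e j‖ ≤ 1) (hue : ∀ j, ‖u j - e j‖ ≤ r) :
    |gramVol u - gramVol e| ≤ (m + 1) * r := by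
  classical
  set seq : ℕ → (Fin (m+1) → EuclideanSpace ℝ (Fin d)) :=
    fun t j => if (j : ℕ) < t then u j else e j with hseq
  have hseq0 : seq 0 = e := by funext j; simp [hseq]
  have hseqtop : seq (m+1) = u := by funext j; simp [hseq, j.isLt]
  have key : ∀ t : ℕ, |gramVol (seq t) - gramVol (seq 0)| ≤ t * r := by
    intro t
    induction t with
    | zero => simp
    | succ t ih =>
      have hnorm : ∀ s (j : Fin (m+1)), ‖seq s j‖ ≤ 1 := by
        intro s j
        by_cases h : (j : ℕ) < s <;> simp [hseq, h, hu j, he j]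
      by_cases ht : t < m + 1
      · set i : Fin (m+1) := ⟨t, ht⟩ with hi
        have hstep : |gramVol (seq (t+1)) - gramVol (seq t)| ≤ ‖seq (t+1) i - seq t i‖ := by
          refine gramVol_slot _ _ i ?_ (hnorm _) (hnorm _)
          intro j hj
          have : (j : ℕ) < t + 1 ↔ (j : ℕ) < t := by
            constructor
            · intro h
              rcases Nat.lt_succ_iff_lt_or_eq.1 h with h' | h'
              · exact h'
              · exact absurd (Fin.ext h' : j = i) hj
            · exact fun h => h.trans (Nat.lt_succ_self t)
          simp only [hseq]
          by_cases h : (j : ℕ) < t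
          · simp [h, this.2 h]
          · have h1 : ¬ (j : ℕ) < t + 1 := fun hh => h (this.1 hh)
            simp [h, h1]
        have hval : ‖seq (t+1) i - seq t i‖ ≤ r := by
          have h1 : seq (t+1) i = u i := by simp [hseq, hi]
          have h2 : seq t i = e i := by simp [hseq, hi]
          rw [h1, h2]; exact hue i
        calc |gramVol (seq (t+1)) - gramVol (seq 0)|
            ≤ |gramVol (seq (t+1)) - gramVol (seq t)| + |gramVol (seq t) - gramVol (seq 0)| := by
              have := abs_sub_abs_le_abs_sub (gramVol (seq (t+1)) - gramVol (seq 0)) 0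
              exact abs_sub_le _ _ _
          _ ≤ r + t * r := add_le_add (hstep.trans hval) ih
          _ = ((t + 1 : ℕ) : ℝ) * r := by push_cast; ring
      · have heq : seq (t+1) = seq t := by
          funext j
          have hj := j.isLt
          have h1 : (j : ℕ) < t + 1 := by omega
          have h2 : (j : ℕ) < t := by omega
          simp [hseq, h1, h2]
        rw [heq]
        refine ih.trans ?_
        push_cast
        nlinarith [hr]
  have := key (m+1)
  rw [hseq0, hseqtop] at this
  calc |gramVol u - gramVol e| ≤ ((m+1 : ℕ) : ℝ) * r := this
    _ = ((m : ℝ) + 1) * r := by push_cast; ring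

lemma extend_subspace (k : ℕ) (hk : k ≤ d) :
    ∀ n (K : Submodule ℝ (EuclideanSpace ℝ (Fin d))), Module.finrank ℝ K + n = k →
    ∃ H, K ≤ H ∧ Module.finrank ℝ H = k := by
  intro n
  induction n with
  | zero => exact fun K hK => ⟨K, le_rfl, by omega⟩
  | succ n ih =>
    intro K hK
    have hlt : Module.finrank ℝ K < Module.finrank ℝ (EuclideanSpace ℝ (Fin d)) := by
      rw [finrank_euclideanSpace_fin]
      omega
    obtain ⟨x, hx⟩ := Submodule.exists_of_finrank_lt K hlt
    have hxK : x ∉ K := by simpa using hx 1 one_ne_zero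
    have hx0 : x ≠ 0 := by
      intro h
      exact hxK (h ▸ K.zero_mem)
    have hinf : K ⊓ Submodule.span ℝ {x} = ⊥ := by
      rw [Submodule.eq_bot_iff]
      intro y hy
      rw [Submodule.mem_inf] at hy
      obtain ⟨r, rfl⟩ := Submodule.mem_span_singleton.1 hy.2
      by_cases hr : r = 0
      · simp [hr]
      · exact absurd hy.1 (hx r hr)
    have hrank : Module.finrank ℝ ↥(K ⊔ Submodule.span ℝ {x}) = Module.finrank ℝ K + 1 := by
      have h := Submodule.finrank_sup_add_finrank_inf_eq K (Submodule.span ℝ {x})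
      rw [hinf, finrank_bot, finrank_span_singleton hx0] at h
      omega
    obtain ⟨H, hH1, hH2⟩ := ih (K ⊔ Submodule.span ℝ {x}) (by omega)
    exact ⟨H, le_trans le_sup_left hH1, hH2⟩

lemma pow_sub_pow_le' (a b : ℝ) (hba : b ≤ a) (hb : 0 ≤ b) (ha1 : a ≤ 1) (n : ℕ) :
    a ^ n - b ^ n ≤ n * (a - b) := by
  induction n with
  | zero => simp
  | succ n ih =>
    have ha : 0 ≤ a := hb.trans hba
    have h1 : a ^ n ≤ 1 := pow_le_one₀ ha ha1
    have h2 : 0 ≤ b ^ n := pow_nonneg hb n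
    have h3 : b ^ n ≤ a ^ n := pow_le_pow_left₀ hb hba n
    rw [pow_succ, pow_succ]
    push_cast
    nlinarith [ih]

end BG

open BG

/-- Bourgain–Guth dichotomy: for a family `S` of caps of radius `ρ^d/(1000d)` on `S^{d-1}`,
either (I) there are caps `τ_1,…,τ_{k+1} ∈ S` with `|u_1 ∧ ⋯ ∧ u_{k+1}| ≥ ρ^k/2` for all
choices `u_j ∈ τ_j`, or (II) there is a `k`-dimensional subspace `H` such that at least half
the caps of `S` are contained in the `ρ`-neighborhood of `H`. -/
theorem stmt_5 (d k : ℕ) (hk : 1 ≤ k) (hkd : k ≤ d - 1) (ρ : ℝ) (hρ : ρ ∈ Ioo (0 : ℝ) 1)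
    (S : Finset (EuclideanSpace ℝ (Fin d))) (hS : ∀ e ∈ S, ‖e‖ = 1) :
    (∃ τ : Fin (k + 1) → EuclideanSpace ℝ (Fin d), (∀ j, τ j ∈ S) ∧
      ∀ u : Fin (k + 1) → EuclideanSpace ℝ (Fin d),
        (∀ j, u j ∈ sphCap (τ j) (ρ ^ d / (1000 * d))) → ρ ^ k / 2 ≤ gramVol u) ∨
    (∃ H : Submodule ℝ (EuclideanSpace ℝ (Fin d)), Module.finrank ℝ H = k ∧
      (S.card : ℝ) ≤ 2 * ({e ∈ (S : Set (EuclideanSpace ℝ (Fin d))) |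
        sphCap e (ρ ^ d / (1000 * d)) ⊆ {x | Metric.infDist x H ≤ ρ}}.ncard : ℝ)) := by
  classical
  obtain ⟨hρ0, hρ1⟩ := hρ
  have hd2 : 2 ≤ d := by omega
  have hkd' : k + 1 ≤ d := by omega
  set r : ℝ := ρ ^ d / (1000 * d) with hrdef
  have hdR : (2:ℝ) ≤ (d:ℝ) := by exact_mod_cast hd2
  have hd0 : (0:ℝ) < 1000 * d := by nlinarith
  have hρd : 0 < ρ ^ d := pow_pos hρ0 d
  have hr0 : 0 < r := div_pos hρd hd0
  have hρdρ : ρ ^ d ≤ ρ := by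
    calc ρ ^ d ≤ ρ ^ 1 := pow_le_pow_of_le_one hρ0.le hρ1.le (by omega)
      _ = ρ := pow_one ρ
  have hr_small : r ≤ ρ / 2000 := by
    rw [hrdef, div_le_div_iff₀ hd0 (by norm_num)]
    nlinarith [mul_le_mul_of_nonneg_left hdR hρ0.le,
      mul_le_mul_of_nonneg_right hρdρ (by norm_num : (0:ℝ) ≤ 2000)]
  have hρr0 : 0 ≤ ρ - r := by linarith
  have hρr1 : ρ - r ≤ 1 := by linarith
  have main : ∀ j : ℕ, j ≤ k + 1 →
      (∃ H : Submodule ℝ (EuclideanSpace ℝ (Fin d)), Module.finrank ℝ H = k ∧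
        (S.card : ℝ) ≤ 2 * ({e ∈ (S : Set (EuclideanSpace ℝ (Fin d))) |
          sphCap e r ⊆ {x | Metric.infDist x H ≤ ρ}}.ncard : ℝ)) ∨
      (∃ w : Fin j → EuclideanSpace ℝ (Fin d), (∀ i, w i ∈ S) ∧
        (ρ - r) ^ (j - 1) ≤ gramVol w) := by
    intro j
    induction j with
    | zero =>
      intro _
      right
      exact ⟨Fin.elim0, fun i => i.elim0, by rw [gramVol_zero]; simp⟩
    | succ j ih =>
      intro hj
      rcases ih (by omega) with hII | ⟨w, hwS, hwvol⟩
      · exact Or.inl hII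
      set T := S.filter (fun e => pd w e ≤ ρ - r) with hTdef
      by_cases hhalf : (S.card : ℝ) ≤ 2 * T.card
      · left
        set K := Submodule.span ℝ (Set.range w) with hKdef
        have hfrK : Module.finrank ℝ K ≤ k := by
          have h1 : Module.finrank ℝ K ≤ j := by
            simpa [Set.finrank] using finrank_range_le_card (R := ℝ) w
          omega
        obtain ⟨H, hKH, hHrank⟩ := extend_subspace k (by omega)
          (k - Module.finrank ℝ K) K (by omega)
        refine ⟨H, hHrank, hhalf.trans ?_⟩
        have hsub : (T : Set (EuclideanSpace ℝ (Fin d))) ⊆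
            {e ∈ (S : Set (EuclideanSpace ℝ (Fin d))) |
              sphCap e r ⊆ {x | Metric.infDist x H ≤ ρ}} := by
          intro e he
          rw [Finset.mem_coe, hTdef, Finset.mem_filter] at he
          refine ⟨he.1, ?_⟩
          intro x hx
          obtain ⟨hx1, hx2⟩ := hx
          set p : EuclideanSpace ℝ (Fin d) :=
            (Submodule.orthogonalProjectionOnto K e : EuclideanSpace ℝ (Fin d)) with hpdef
          have hpH : p ∈ (H : Set (EuclideanSpace ℝ (Fin d))) := hKH (SetLike.coe_mem _)
          have hinf : Metric.infDist x (H : Set (EuclideanSpace ℝ (Fin d))) ≤ dist x p :=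
            Metric.infDist_le_dist_of_mem hpH
          have hxp : dist x p ≤ ρ := by
            rw [dist_eq_norm]
            have : x - p = (x - e) + (e - p) := by abel
            rw [this]
            have h3 : ‖e - p‖ = pd w e := rfl
            calc ‖(x - e) + (e - p)‖ ≤ ‖x - e‖ + ‖e - p‖ := norm_add_le _ _
              _ ≤ r + (ρ - r) := by rw [h3]; exact add_le_add hx2 he.2
              _ = ρ := by ring
          exact le_trans hinf hxp
        have hfin : ({e ∈ (S : Set (EuclideanSpace ℝ (Fin d))) |
            sphCap e r ⊆ {x | Metric.infDist x H ≤ ρ}}).Finite :=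
          S.finite_toSet.subset (Set.sep_subset _ _)
        have hcard : (T.card : ℝ) ≤ (({e ∈ (S : Set (EuclideanSpace ℝ (Fin d))) |
            sphCap e r ⊆ {x | Metric.infDist x H ≤ ρ}}).ncard : ℝ) := by
          have h1 := Set.ncard_le_ncard hsub hfin
          rw [Set.ncard_coe_finset] at h1
          exact_mod_cast h1
        linarith
      · right
        push_neg at hhalf
        have hex : ∃ e ∈ S, ρ - r < pd w e := by
          by_contra hcon
          push_neg at hcon
          have hTS : T = S := by
            rw [hTdef]
            exact Finset.filter_true_of_mem fun e he => hcon e he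
          rw [hTS] at hhalf
          have h0 : (0:ℝ) ≤ (S.card : ℝ) := Nat.cast_nonneg _
          linarith
        obtain ⟨e, heS, hpe⟩ := hex
        refine ⟨Fin.snoc w e, ?_, ?_⟩
        · intro i
          refine Fin.lastCases ?_ ?_ i
          · simpa using heS
          · intro i'
            simpa using hwS i'
        · rw [gramVol_snoc]
          rcases Nat.eq_zero_or_pos j with rfl | hjpos
          · have h1 : gramVol w = 1 := gramVol_zero w
            have h2 : pd w e = ‖e‖ := by
              rw [pd_eq_infDist]
              have hsp : (Submodule.span ℝ (Set.range w) :
                  Set (EuclideanSpace ℝ (Fin d))) = {0} := by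
                rw [Set.range_eq_empty, Submodule.span_empty]
                rfl
              rw [hsp, Metric.infDist_singleton, dist_zero_right]
            rw [h1, h2, hS e heS]
            norm_num
          · have h1 : (j + 1) - 1 = (j - 1) + 1 := by omega
            rw [h1, pow_succ]
            exact mul_le_mul hwvol hpe.le hρr0 (gramVol_nonneg _)
  rcases main (k+1) le_rfl with hII | ⟨τ, hτS, hτvol⟩
  · exact Or.inr hII
  · left
    refine ⟨τ, hτS, ?_⟩
    intro u hu
    have hτn : ∀ jj, ‖τ jj‖ ≤ 1 := fun jj => le_of_eq (hS _ (hτS jj))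
    have hun : ∀ jj, ‖u jj‖ ≤ 1 := fun jj => le_of_eq (hu jj).1
    have hur : ∀ jj, ‖u jj - τ jj‖ ≤ r := fun jj => (hu jj).2
    have happ := gramVol_approx u τ r hr0.le hun hτn hur
    have h1 : gramVol τ - gramVol u ≤ ((k:ℝ) + 1) * r := by
      have := abs_sub_le_iff.1 happ
      linarith [this.2]
    have h2 : ρ ^ k - (ρ - r) ^ k ≤ (k:ℝ) * r := by
      have := pow_sub_pow_le' ρ (ρ - r) (by linarith) hρr0 hρ1.le k
      simpa using this
    have h3 : ρ ^ d ≤ ρ ^ k := pow_le_pow_of_le_one hρ0.le hρ1.le (by omega)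
    have hvolk : (k + 1 : ℕ) - 1 = k := by omega
    rw [hvolk] at hτvol
    have hkR : ((k:ℝ) + 1) + (k:ℝ) ≤ 2 * (d:ℝ) := by
      have h : (2 * k + 1 : ℕ) ≤ 2 * d := by omega
      have h' : ((2 * k + 1 : ℕ) : ℝ) ≤ ((2 * d : ℕ) : ℝ) := Nat.cast_le.2 h
      push_cast at h'
      linarith
    have hdr : (2 * (d:ℝ)) * r = ρ ^ d / 500 := by
      rw [hrdef]
      field_simp
      ring
    have hρk0 : 0 < ρ ^ k := pow_pos hρ0 k
    -- gramVol u ≥ (ρ-r)^k - (k+1) r ≥ ρ^k - (2k+1) r ≥ ρ^k - ρ^d/500 ≥ ρ^k (1 - 1/500) ≥ ρ^k/2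
    nlinarith [mul_le_mul_of_nonneg_right hkR hr0.le]
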